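/- (Refined descent, convex case) Let f be convex and L-smooth, g proper closed convex, φ = f + g, and 0 < t ≤ 1/L. With x⁺ := prox_{tg}(x − t∇f(x)) and G(·,t) the proximal gradient mapping, φ(x) ≥ φ(x⁺) + (t/2)‖G(x,t)‖² + (t/2)‖G(x⁺,t)‖². -/

import Mathlib

open scoped RealInnerProductSpace
open Filter Set Topology

lemma aux_convex_grad_ineq {E : Type*} [NormedAddCommGroup E] [InnerProductSpace ℝ E] [CompleteSpace E]
    (f : E → ℝ) (gr : E) (w : E)
    (hd : HasGradientAt f gr w) (hconv : ConvexOn ℝ Set.univ f) (z : E) :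
    f w + ⟪gr, z - w⟫ ≤ f z := by
  have hc : HasDerivAt (fun s : ℝ => w + s • (z - w)) (z - w) 0 := by
    simpa using ((hasDerivAt_id (0 : ℝ)).smul_const (z - w)).const_add w
  have h2 : HasFDerivAt f (InnerProductSpace.toDual ℝ E gr) ((fun s : ℝ => w + s • (z - w)) 0) := by
    simpa using hd.hasFDerivAt
  have hf : HasDerivAt (fun s : ℝ => f (w + s • (z - w))) ⟪gr, z - w⟫ 0 := by
    have h3 := h2.comp_hasDerivAt 0 hc
    simp only [InnerProductSpace.toDual_apply_apply] at h3
    exact h3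
  have htend := (hasDerivAt_iff_tendsto_slope.mp hf).mono_left
    (nhdsWithin_mono _ (fun s hs => ne_of_gt hs) : 𝓝[>] (0:ℝ) ≤ 𝓝[≠] (0:ℝ))
  have hev : ∀ᶠ s in 𝓝[>] (0:ℝ),
      slope (fun s : ℝ => f (w + s • (z - w))) 0 s ≤ f z - f w := by
    filter_upwards [Ioo_mem_nhdsGT_of_mem (by norm_num : (0:ℝ) ∈ Set.Ico 0 1)] with s hs
    have hs0 : 0 < s := hs.1
    have hs1 : s < 1 := hs.2
    have hcv := hconv.2 (Set.mem_univ w) (Set.mem_univ z)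
      (by linarith : (0:ℝ) ≤ 1 - s) (le_of_lt hs0) (by ring)
    have heq : (1 - s) • w + s • z = w + s • (z - w) := by
      rw [smul_sub]; module
    rw [heq] at hcv
    have : slope (fun s : ℝ => f (w + s • (z - w))) 0 s
        = (f (w + s • (z - w)) - f w) / s := by
      rw [slope_def_field]; simp
    simp only [smul_eq_mul] at hcv
    rw [this, div_le_iff₀ hs0]
    nlinarith
  have := le_of_tendsto htend hev
  linarith


lemma aux_descent {E : Type*} [NormedAddCommGroup E] [InnerProductSpace ℝ E] [CompleteSpace E]
    (f : E → ℝ) (f' : E → E) (L : ℝ) (hL : 0 < L)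
    (hdiff : ∀ x, HasGradientAt f (f' x) x)
    (hconv : ConvexOn ℝ Set.univ f)
    (hlip : ∀ x y, ‖f' x - f' y‖ ≤ L * ‖x - y‖) (x y : E) :
    f y ≤ f x + ⟪f' x, y - x⟫ + (L / 2) * ‖y - x‖ ^ 2 := by
  have key : ∀ n : ℕ, ∀ x y : E,
      f y - f x - ⟪f' x, y - x⟫ ≤ (L / 2 + L / 2 ^ (n + 1)) * ‖y - x‖ ^ 2 := by
    intro n
    induction n with
    | zero =>
      intro x y
      have h1 := aux_convex_grad_ineq f (f' x) x (hdiff x) hconv y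
      have h2 := aux_convex_grad_ineq f (f' y) y (hdiff y) hconv x
      have h3 : ⟪f' y, x - y⟫ = -⟪f' y, y - x⟫ := by
        rw [← inner_neg_right]; congr 1; abel
      have h4 : ⟪f' y - f' x, y - x⟫ ≤ ‖f' y - f' x‖ * ‖y - x‖ := real_inner_le_norm _ _
      have h5 : ‖f' y - f' x‖ * ‖y - x‖ ≤ (L * ‖y - x‖) * ‖y - x‖ :=
        mul_le_mul_of_nonneg_right (hlip y x) (norm_nonneg _)
      rw [inner_sub_left] at h4
      rw [h3] at h2
      nlinarith [sq_nonneg ‖y - x‖, norm_nonneg (y - x)]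
    | succ n ih =>
      intro x y
      set m := x + (1 / 2 : ℝ) • (y - x) with hm
      have hmx : m - x = (1 / 2 : ℝ) • (y - x) := by rw [hm]; abel
      have hym : y - m = (1 / 2 : ℝ) • (y - x) := by rw [hm]; module
      have hnm : ‖m - x‖ = ‖y - x‖ / 2 := by
        rw [hmx, norm_smul]; simp; ring
      have hny : ‖y - m‖ = ‖y - x‖ / 2 := by
        rw [hym, norm_smul]; simp; ring
      have h1 : ⟪f' x, y - x⟫ = ⟪f' x, m - x⟫ + ⟪f' x, y - m⟫ := by
        rw [← inner_add_right]; congr 1; abel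
      have h2 : ⟪f' m - f' x, y - m⟫ = ⟪f' m, y - m⟫ - ⟪f' x, y - m⟫ := by
        rw [inner_sub_left]
      have hcross : ⟪f' m - f' x, y - m⟫ ≤ (L / 4) * ‖y - x‖ ^ 2 := by
        have := real_inner_le_norm (f' m - f' x) (y - m)
        have h5 : ‖f' m - f' x‖ ≤ L * ‖m - x‖ := hlip m x
        have h6 : ‖f' m - f' x‖ * ‖y - m‖ ≤ (L * ‖m - x‖) * ‖y - m‖ :=
          mul_le_mul_of_nonneg_right h5 (norm_nonneg _)
        rw [hny] at this
        rw [hnm, hny] at h6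
        nlinarith
      have ia := ih x m
      have ib := ih m y
      rw [hnm] at ia
      rw [hny] at ib
      have hp : (0:ℝ) < 2 ^ (n + 1) := by positivity
      have hpow : (2:ℝ) ^ (n + 2) = 2 * 2 ^ (n + 1) := by ring
      have hc : (L / 2 + L / 2 ^ (n + 1)) * (‖y - x‖ / 2) ^ 2 * 2 + (L / 4) * ‖y - x‖ ^ 2
          = (L / 2 + L / 2 ^ (n + 2)) * ‖y - x‖ ^ 2 := by
        field_simp
        ring
      nlinarith [sq_nonneg ‖y - x‖]
  have htends : Tendsto (fun n : ℕ => (L / 2 + L / 2 ^ (n + 1)) * ‖y - x‖ ^ 2) atTop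
      (𝓝 ((L / 2 + 0) * ‖y - x‖ ^ 2)) := by
    apply Tendsto.mul_const
    apply tendsto_const_nhds.add
    have h0 : Tendsto (fun n : ℕ => ((1:ℝ) / 2) ^ n) atTop (𝓝 0) :=
      tendsto_pow_atTop_nhds_zero_of_lt_one (by norm_num) (by norm_num)
    have h1 : Tendsto (fun n : ℕ => L * ((1:ℝ) / 2) ^ (n + 1)) atTop (𝓝 (L * 0)) :=
      (h0.comp (tendsto_add_atTop_nat 1)).const_mul L
    simpa [div_pow, mul_comm, div_eq_mul_inv, inv_pow] using h1
  have := ge_of_tendsto htends (Eventually.of_forall (fun n => key n x y))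
  simp only [add_zero] at this
  linarith

lemma aux_strong {E : Type*} [NormedAddCommGroup E] [InnerProductSpace ℝ E] [CompleteSpace E]
    (f : E → ℝ) (f' : E → E) (L : ℝ) (hL : 0 < L)
    (hdiff : ∀ x, HasGradientAt f (f' x) x)
    (hconv : ConvexOn ℝ Set.univ f)
    (hlip : ∀ x y, ‖f' x - f' y‖ ≤ L * ‖x - y‖) (x y : E) :
    f y + ⟪f' y, x - y⟫ + (1 / (2 * L)) * ‖f' x - f' y‖ ^ 2 ≤ f x := by
  set d := f' x - f' y with hd
  set z := x - (1 / L) • d with hz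
  have h1 := aux_convex_grad_ineq f (f' y) y (hdiff y) hconv z
  have h2 := aux_descent f f' L hL hdiff hconv hlip x z
  have hzx : z - x = -((1 / L) • d) := by rw [hz]; abel
  have e1 : ⟪f' x, z - x⟫ = -(1 / L) * ⟪f' x, d⟫ := by
    rw [hzx, inner_neg_right, real_inner_smul_right]; ring
  have e2 : ‖z - x‖ ^ 2 = (1 / L) ^ 2 * ‖d‖ ^ 2 := by
    rw [hzx, norm_neg, norm_smul, Real.norm_eq_abs,
      abs_of_pos (by positivity : (0:ℝ) < 1 / L), mul_pow]
  have e3 : ⟪f' y, z - y⟫ = ⟪f' y, x - y⟫ - (1 / L) * ⟪f' y, d⟫ := by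
    have : z - y = (x - y) - (1 / L) • d := by rw [hz]; abel
    rw [this, inner_sub_right, real_inner_smul_right]
  have e4 : ⟪f' x, d⟫ - ⟪f' y, d⟫ = ‖d‖ ^ 2 := by
    rw [← inner_sub_left, ← hd, real_inner_self_eq_norm_sq]
  rw [e1, e2] at h2
  rw [e3] at h1
  have hL' : (0:ℝ) < 1 / L := by positivity
  have harith : (L / 2) * ((1 / L) ^ 2 * ‖d‖ ^ 2) = (1 / (2 * L)) * ‖d‖ ^ 2 := by
    field_simp
  have e5 : (1 / L) * ⟪f' x, d⟫ - (1 / L) * ⟪f' y, d⟫ = (1 / L) * ‖d‖ ^ 2 := by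
    rw [← mul_sub, e4]
  have e6 : (1 / L) * ‖d‖ ^ 2 = 2 * ((1 / (2 * L)) * ‖d‖ ^ 2) := by
    field_simp
  linarith [h1, h2, harith, e5, e6]

lemma aux_prox_subgrad {E : Type*} [NormedAddCommGroup E] [InnerProductSpace ℝ E]
    (g : E → ℝ) (hg : ConvexOn ℝ Set.univ g) (t : ℝ) (ht : 0 < t)
    (y p : E) (hmin : IsMinOn (fun z => g z + (1 / (2 * t)) * ‖z - y‖ ^ 2) Set.univ p)
    (z : E) : g p + (1 / t) * ⟪y - p, z - p⟫ ≤ g z := by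
  have key : ∀ s : ℝ, s ∈ Ioo (0:ℝ) 1 →
      g p + (1 / t) * ⟪y - p, z - p⟫ ≤ g z + (s / (2 * t)) * ‖z - p‖ ^ 2 := by
    intro s hs
    have hs0 : 0 < s := hs.1
    have hs1 : s < 1 := hs.2
    have hmin' := isMinOn_iff.mp hmin (p + s • (z - p)) (Set.mem_univ _)
    have hcv := hg.2 (Set.mem_univ p) (Set.mem_univ z)
      (by linarith : (0:ℝ) ≤ 1 - s) (le_of_lt hs0) (by ring)
    have heq : (1 - s) • p + s • z = p + s • (z - p) := by rw [smul_sub]; module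
    rw [heq] at hcv
    simp only [smul_eq_mul] at hcv
    have hnorm : ‖p + s • (z - p) - y‖ ^ 2
        = ‖p - y‖ ^ 2 + 2 * (s * ⟪p - y, z - p⟫) + s ^ 2 * ‖z - p‖ ^ 2 := by
      have : p + s • (z - p) - y = (p - y) + s • (z - p) := by abel
      rw [this, norm_add_sq_real, real_inner_smul_right, norm_smul]
      simp [abs_of_pos hs0]
      ring
    rw [hnorm] at hmin'
    have hip : ⟪y - p, z - p⟫ = -⟪p - y, z - p⟫ := by
      rw [← inner_neg_left]; congr 1; abel
    rw [hip]
    have h2t : (0:ℝ) < 2 * t := by linarith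
    -- from hmin' : g p + c ‖p-y‖² ≤ (1-s) g p + s g z + c (‖p-y‖² + 2 s ip + s² n)
    have expand : g p ≤ (1 - s) * g p + s * g z
        + (1 / (2 * t)) * (2 * (s * ⟪p - y, z - p⟫) + s ^ 2 * ‖z - p‖ ^ 2) := by
      have := hmin'
      nlinarith [this, hcv]
    have hs' : 0 ≤ s * ((g z - g p) + (1 / t) * ⟪p - y, z - p⟫ + (s / (2 * t)) * ‖z - p‖ ^ 2) := by
      have hexp : s * ((g z - g p) + (1 / t) * ⟪p - y, z - p⟫ + (s / (2 * t)) * ‖z - p‖ ^ 2)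
          = (1 - s) * g p + s * g z
            + (1 / (2 * t)) * (2 * (s * ⟪p - y, z - p⟫) + s ^ 2 * ‖z - p‖ ^ 2) - g p := by
        field_simp
        ring
      rw [hexp]; linarith [expand]
    have hdiv : 0 ≤ (g z - g p) + (1 / t) * ⟪p - y, z - p⟫ + (s / (2 * t)) * ‖z - p‖ ^ 2 := by
      nlinarith [hs', hs0]
    linarith
  have hcont : Continuous (fun s : ℝ => g z + (s / (2 * t)) * ‖z - p‖ ^ 2) := by
    continuity
  have htend : Tendsto (fun s : ℝ => g z + (s / (2 * t)) * ‖z - p‖ ^ 2) (𝓝[>] (0:ℝ))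
      (𝓝 (g z)) := by
    have h0 : Tendsto (fun s : ℝ => g z + (s / (2 * t)) * ‖z - p‖ ^ 2) (𝓝 (0:ℝ))
        (𝓝 (g z + ((0:ℝ) / (2 * t)) * ‖z - p‖ ^ 2)) := hcont.continuousAt
    have h1 := h0.mono_left (nhdsWithin_le_nhds (s := Set.Ioi (0:ℝ)))
    simpa using h1
  refine ge_of_tendsto htend ?_
  filter_upwards [Ioo_mem_nhdsGT_of_mem (by norm_num : (0:ℝ) ∈ Set.Ico 0 1)] with s hs
  exact key s hs

lemma aux_prox_nonexp {E : Type*} [NormedAddCommGroup E] [InnerProductSpace ℝ E]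
    (g : E → ℝ) (hg : ConvexOn ℝ Set.univ g) (t : ℝ) (ht : 0 < t) (prox : E → E)
    (hprox : ∀ y : E, IsMinOn (fun z => g z + (1 / (2 * t)) * ‖z - y‖ ^ 2) Set.univ (prox y))
    (u v : E) : ‖prox u - prox v‖ ≤ ‖u - v‖ := by
  set q := prox u - prox v with hq
  have h1 := aux_prox_subgrad g hg t ht u (prox u) (hprox u) (prox v)
  have h2 := aux_prox_subgrad g hg t ht v (prox v) (hprox v) (prox u)
  have e1 : ⟪u - prox u, prox v - prox u⟫ = -⟪u - prox u, q⟫ := by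
    rw [← inner_neg_right]; congr 1; rw [hq]; abel
  have e2 : ⟪v - prox v, prox u - prox v⟫ = ⟪v - prox v, q⟫ := by rw [hq]
  rw [e1] at h1; rw [e2] at h2
  have hsum : 0 ≤ (1 / t) * (⟪u - prox u, q⟫ - ⟪v - prox v, q⟫) := by linarith
  have hX : ⟪u - prox u, q⟫ - ⟪v - prox v, q⟫ = ⟪u - v, q⟫ - ‖q‖ ^ 2 := by
    rw [← inner_sub_left, ← real_inner_self_eq_norm_sq, ← inner_sub_left]
    congr 1; rw [hq]; abel
  have ht' : 0 < 1 / t := by positivity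
  have hfirm : ‖q‖ ^ 2 ≤ ⟪u - v, q⟫ := by nlinarith [hsum, hX]
  have hcs : ⟪u - v, q⟫ ≤ ‖u - v‖ * ‖q‖ := real_inner_le_norm _ _
  rcases eq_or_lt_of_le (norm_nonneg q) with h0 | h0
  · rw [← h0]; exact norm_nonneg _
  · have : ‖q‖ * ‖q‖ ≤ ‖u - v‖ * ‖q‖ := by nlinarith
    exact le_of_mul_le_mul_right this h0

/-- **Refined descent lemma (convex case).** With `x⁺ = prox_{tg}(x - t∇f x)` and
`G(z,t) = (1/t)(z - prox_{tg}(z - t∇f z))`, for `0 < t ≤ 1/L`: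
`φ(x) ≥ φ(x⁺) + (t/2)‖G(x,t)‖² + (t/2)‖G(x⁺,t)‖²`. -/
theorem refined_descent_convex
    {E : Type*} [NormedAddCommGroup E] [InnerProductSpace ℝ E] [FiniteDimensional ℝ E]
    (f : E → ℝ) (f' : E → E) (g : E → ℝ) (L : ℝ) (hL : 0 < L)
    (hdiff : ∀ x, HasGradientAt f (f' x) x)
    (hconv : ConvexOn ℝ Set.univ f)
    (hlip : ∀ x y, ‖f' x - f' y‖ ≤ L * ‖x - y‖)
    (hg : ConvexOn ℝ Set.univ g)
    (t : ℝ) (ht : 0 < t) (htL : t ≤ 1 / L) (prox : E → E)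
    (hprox : ∀ y : E, IsMinOn (fun z => g z + (1 / (2 * t)) * ‖z - y‖ ^ 2) Set.univ (prox y))
    (x xplus : E) (hxplus : xplus = prox (x - t • f' x)) :
    f x + g x ≥ f xplus + g xplus
      + (t / 2) * ‖(1 / t) • (x - xplus)‖ ^ 2
      + (t / 2) * ‖(1 / t) • (xplus - prox (xplus - t • f' xplus))‖ ^ 2 := by
  set u := x - t • f' x with hu
  set v := xplus - t • f' xplus with hv
  set y := prox v with hy
  have h2t : (0:ℝ) < 2 * t := by linarith
  -- g-part inequality
  have hg1 : g xplus + (1 / t) * ⟪u - xplus, x - xplus⟫ ≤ g x := by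
    have h := aux_prox_subgrad g hg t ht u (prox u) (hprox u) x
    rwa [← hxplus] at h
  -- f-part inequality
  have hf1 : f xplus + ⟪f' xplus, x - xplus⟫
      + (1 / (2 * L)) * ‖f' x - f' xplus‖ ^ 2 ≤ f x :=
    aux_strong f f' L hL hdiff hconv hlip x xplus
  -- nonexpansiveness of prox
  have hne : ‖xplus - y‖ ≤ ‖u - v‖ := by
    have h := aux_prox_nonexp g hg t ht prox hprox u v
    rwa [← hxplus] at h
  set a := x - xplus with ha
  set d := f' x - f' xplus with hd2
  have huv : u - v = a - t • d := by
    rw [hu, hv, ha, hd2, smul_sub]; abel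
  have hiu : ⟪u - xplus, a⟫ = ‖a‖ ^ 2 - t * ⟪f' x, a⟫ := by
    have h : u - xplus = a - t • f' x := by rw [hu, ha]; abel
    rw [h, inner_sub_left, real_inner_smul_left, real_inner_self_eq_norm_sq]
  have hinner_d : ⟪f' x, a⟫ - ⟪f' xplus, a⟫ = ⟪d, a⟫ := by
    rw [hd2, inner_sub_left]
  have hcomm : ⟪d, a⟫ = ⟪a, d⟫ := real_inner_comm _ _
  have hsq : ‖a - t • d‖ ^ 2 = ‖a‖ ^ 2 - 2 * (t * ⟪a, d⟫) + t ^ 2 * ‖d‖ ^ 2 := by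
    rw [norm_sub_sq_real, real_inner_smul_right, norm_smul, Real.norm_eq_abs,
      abs_of_pos ht, mul_pow]
  have hbsq : ‖xplus - y‖ ^ 2 ≤ ‖a - t • d‖ ^ 2 := by
    rw [← huv]; exact pow_le_pow_left₀ (norm_nonneg _) hne 2
  -- rewrite the goal norms
  have hn1 : ‖(1 / t) • (x - xplus)‖ ^ 2 = (1 / t) ^ 2 * ‖a‖ ^ 2 := by
    rw [← ha, norm_smul, Real.norm_eq_abs, abs_of_pos (by positivity : (0:ℝ) < 1 / t), mul_pow]
  have hn2 : ‖(1 / t) • (xplus - y)‖ ^ 2 = (1 / t) ^ 2 * ‖xplus - y‖ ^ 2 := by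
    rw [norm_smul, Real.norm_eq_abs, abs_of_pos (by positivity : (0:ℝ) < 1 / t), mul_pow]
  have harith1 : (t / 2) * ((1 / t) ^ 2 * ‖a‖ ^ 2) = ‖a‖ ^ 2 / (2 * t) := by
    field_simp
  have harith2 : (t / 2) * ((1 / t) ^ 2 * ‖xplus - y‖ ^ 2) = ‖xplus - y‖ ^ 2 / (2 * t) := by
    field_simp
  have hg1' : g xplus + ‖a‖ ^ 2 / t - ⟪f' x, a⟫ ≤ g x := by
    have heq : (1 / t) * ⟪u - xplus, x - xplus⟫ = ‖a‖ ^ 2 / t - ⟪f' x, a⟫ := by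
      rw [← ha, hiu]; field_simp
    linarith [hg1, heq.ge, heq.le]
  have hLt : t / 2 ≤ 1 / (2 * L) := by
    have h : 1 / (2 * L) = (1 / L) / 2 := by ring
    linarith
  have hdd : (t / 2) * ‖d‖ ^ 2 ≤ (1 / (2 * L)) * ‖d‖ ^ 2 :=
    mul_le_mul_of_nonneg_right hLt (by positivity)
  have hb' : ‖xplus - y‖ ^ 2 / (2 * t) ≤ ‖a‖ ^ 2 / (2 * t) - ⟪a, d⟫ + (t / 2) * ‖d‖ ^ 2 := by
    have h1 : ‖xplus - y‖ ^ 2 / (2 * t) ≤ ‖a - t • d‖ ^ 2 / (2 * t) := by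
      gcongr
    have h2 : ‖a - t • d‖ ^ 2 / (2 * t) = ‖a‖ ^ 2 / (2 * t) - ⟪a, d⟫ + (t / 2) * ‖d‖ ^ 2 := by
      rw [hsq]; field_simp
    linarith
  have hfin : ⟪f' xplus, x - xplus⟫ = ⟪f' xplus, a⟫ := by rw [← ha]
  rw [hn1, hn2, harith1, harith2]
  rw [hfin] at hf1
  have hat : ‖a‖ ^ 2 / t = ‖a‖ ^ 2 / (2 * t) + ‖a‖ ^ 2 / (2 * t) := by
    field_simp; ring
  linarith [hg1', hf1, hdd, hb', hinner_d, hcomm]
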